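/- The number of forests consisting of m ternary trees with n nodes in total equals (m/n) · C(n, (n-m)/3), with the convention that the binomial coefficient is 0 if (n-m)/3 is not a nonnegative integer. -/

import Mathlib

/-- Plane trees: a node carries the (ordered) list of its subtrees. -/
inductive PlaneTree : Type
  | node : List PlaneTree → PlaneTree

namespace PlaneTree

/-- Total number of nodes of a plane tree. -/
def size : PlaneTree → ℕ
  | node ts => 1 + (ts.attach.map (fun x => size x.1)).sum
decreasing_by
  have := List.sizeOf_lt_of_mem x.2
  simp only [PlaneTree.node.sizeOf_spec]
  omega

/-- A ternary tree is a plane tree in which every node has 0 or 3 children. -/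
inductive IsTernary : PlaneTree → Prop
  | leaf : IsTernary (node [])
  | node3 (a b c : PlaneTree) : IsTernary a → IsTernary b → IsTernary c →
      IsTernary (node [a, b, c])

/-- Number of internal nodes (nodes with at least one child). -/
def numInternal : PlaneTree → ℕ
  | node ts => (if ts.length = 0 then 0 else 1) + (ts.attach.map (fun x => numInternal x.1)).sum
decreasing_by
  have := List.sizeOf_lt_of_mem x.2
  simp only [PlaneTree.node.sizeOf_spec]
  omega

/-- Number of leaves (nodes with no child). -/
def numLeaves : PlaneTree → ℕ
  | node ts => (if ts.length = 0 then 1 else 0) + (ts.attach.map (fun x => numLeaves x.1)).sum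
decreasing_by
  have := List.sizeOf_lt_of_mem x.2
  simp only [PlaneTree.node.sizeOf_spec]
  omega

/-- The list of root subtrees. -/
def children : PlaneTree → List PlaneTree
  | node ts => ts

/-- The fringe subtree of a tree at the node addressed by a word (sequence of child
indices), if it exists. -/
def subtreeAt : List ℕ → PlaneTree → Option PlaneTree
  | [], t => some t
  | i :: rest, t => (t.children[i]?).bind (subtreeAt rest)

lemma size_node (ts : List PlaneTree) : (node ts).size = 1 + (ts.map size).sum := by
  rw [size]; simp

lemma size_pos (t : PlaneTree) : 0 < t.size := by
  cases t with
  | node ts => rw [size_node]; omega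

def Forests (m n : ℕ) : Type :=
  {f : List PlaneTree // f.length = m ∧ (∀ t ∈ f, t.IsTernary) ∧ (f.map PlaneTree.size).sum = n}

lemma not_ternary1 (a : PlaneTree) : ¬ IsTernary (node [a]) := by rintro ⟨⟩
lemma not_ternary2 (a b : PlaneTree) : ¬ IsTernary (node [a, b]) := by rintro ⟨⟩
lemma not_ternary4 (a b c d : PlaneTree) (l : List PlaneTree) :
    ¬ IsTernary (node (a :: b :: c :: d :: l)) := by rintro ⟨⟩

def fwd (m n : ℕ) : Forests (m+1) (n+1) → Forests m n ⊕ Forests (m+3) n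
  | ⟨PlaneTree.node [] :: rest, h⟩ => Sum.inl ⟨rest, by
      obtain ⟨h1, h2, h3⟩ := h
      refine ⟨by simpa using h1, fun t ht => h2 t (List.mem_cons_of_mem _ ht), ?_⟩
      simp [size_node] at h3
      omega⟩
  | ⟨PlaneTree.node [a, b, c] :: rest, h⟩ => Sum.inr ⟨a :: b :: c :: rest, by
      obtain ⟨h1, h2, h3⟩ := h
      have hter : IsTernary (node [a, b, c]) := h2 _ List.mem_cons_self
      refine ⟨by simp at h1 ⊢; omega, ?_, ?_⟩
      · intro t ht
        cases hter with
        | node3 a b c ha hb hc =>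
          simp only [List.mem_cons] at ht
          rcases ht with rfl | rfl | rfl | ht
          · exact ha
          · exact hb
          · exact hc
          · exact h2 t (List.mem_cons_of_mem _ ht)
      · simp [size_node] at h3 ⊢
        omega⟩
  | ⟨[], h⟩ => absurd h.1 (by simp)
  | ⟨PlaneTree.node [a] :: rest, h⟩ =>
      absurd (h.2.1 _ List.mem_cons_self) (not_ternary1 a)
  | ⟨PlaneTree.node [a, b] :: rest, h⟩ =>
      absurd (h.2.1 _ List.mem_cons_self) (not_ternary2 a b)
  | ⟨PlaneTree.node (a :: b :: c :: d :: l) :: rest, h⟩ =>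
      absurd (h.2.1 _ List.mem_cons_self) (not_ternary4 a b c d l)

def bwd (m n : ℕ) : Forests m n ⊕ Forests (m+3) n → Forests (m+1) (n+1)
  | Sum.inl ⟨rest, h⟩ => ⟨PlaneTree.node [] :: rest, by
      obtain ⟨h1, h2, h3⟩ := h
      refine ⟨by simp [h1], ?_, by simp [size_node, h3]; omega⟩
      intro t ht
      simp only [List.mem_cons] at ht
      rcases ht with rfl | ht
      · exact IsTernary.leaf
      · exact h2 t ht⟩
  | Sum.inr ⟨a :: b :: c :: rest, h⟩ => ⟨PlaneTree.node [a, b, c] :: rest, by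
      obtain ⟨h1, h2, h3⟩ := h
      refine ⟨by simp at h1 ⊢; omega, ?_, by simp [size_node] at h3 ⊢; omega⟩
      intro t ht
      simp only [List.mem_cons] at ht
      rcases ht with rfl | ht
      · exact IsTernary.node3 a b c (h2 _ (by simp)) (h2 _ (by simp)) (h2 _ (by simp))
      · exact h2 t (by simp [ht])⟩
  | Sum.inr ⟨[], h⟩ => absurd h.1 (by simp)
  | Sum.inr ⟨[a], h⟩ => absurd h.1 (by simp)
  | Sum.inr ⟨[a, b], h⟩ => absurd h.1 (by simp)

def recEquiv (m n : ℕ) : Forests (m+1) (n+1) ≃ Forests m n ⊕ Forests (m+3) n where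
  toFun := fwd m n
  invFun := bwd m n
  left_inv := by
    rintro ⟨f, h⟩
    obtain ⟨h1, h2, h3⟩ := h
    match f, h1 with
    | PlaneTree.node ts :: rest, h1 =>
      have hter : IsTernary (node ts) := h2 _ List.mem_cons_self
      cases hter with
      | leaf => rfl
      | node3 a b c ha hb hc => rfl
  right_inv := by
    rintro (⟨rest, h⟩ | ⟨l, h⟩)
    · rfl
    · match l, h.1 with
      | a :: b :: c :: rest, _ => rfl

end PlaneTree

namespace PlaneTree

lemma eq_nil_of_sum_sizes (f : List PlaneTree) (h : (f.map size).sum = 0) : f = [] := by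
  cases f with
  | nil => rfl
  | cons t rest => simp at h; have := size_pos t; omega

lemma forests_finite : ∀ n m, Finite (Forests m n) := by
  intro n
  induction n with
  | zero =>
    intro m
    have : Subsingleton (Forests m 0) := by
      constructor
      rintro ⟨f, hf⟩ ⟨g, hg⟩
      have hfe := eq_nil_of_sum_sizes f hf.2.2
      have hge := eq_nil_of_sum_sizes g hg.2.2
      subst hfe hge
      rfl
    exact Finite.of_subsingleton
  | succ n ih =>
    intro m
    match m with
    | 0 =>
      have : IsEmpty (Forests 0 (n+1)) := by
        constructor
        rintro ⟨f, hf⟩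
        have : f = [] := List.length_eq_zero_iff.mp hf.1
        subst this
        simp at hf
      exact Finite.of_subsingleton
    | m + 1 =>
      haveI := ih m
      haveI := ih (m + 3)
      exact Finite.of_equiv _ (recEquiv m n).symm

instance (m n : ℕ) : Finite (Forests m n) := forests_finite n m

noncomputable def Fc (m n : ℕ) : ℕ := Nat.card (Forests m n)

lemma Fc_zero (m : ℕ) : Fc m 0 = if m = 0 then 1 else 0 := by
  unfold Fc
  split
  · next hm =>
    subst hm
    haveI : Unique (Forests 0 0) := by
      refine ⟨⟨⟨[], by simp⟩⟩, ?_⟩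
      rintro ⟨f, hf⟩
      have := eq_nil_of_sum_sizes f hf.2.2
      subst this
      rfl
    exact Nat.card_unique
  · next hm =>
    haveI : IsEmpty (Forests m 0) := by
      constructor
      rintro ⟨f, hf⟩
      have := eq_nil_of_sum_sizes f hf.2.2
      subst this
      exact hm hf.1.symm
    exact Nat.card_of_isEmpty

lemma Fc_zero_succ (n : ℕ) : Fc 0 (n+1) = 0 := by
  unfold Fc
  haveI : IsEmpty (Forests 0 (n+1)) := by
    constructor
    rintro ⟨f, hf⟩
    have : f = [] := List.length_eq_zero_iff.mp hf.1
    subst this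
    simp at hf
  exact Nat.card_of_isEmpty

lemma Fc_rec (m n : ℕ) : Fc (m+1) (n+1) = Fc m n + Fc (m+3) n := by
  unfold Fc
  rw [Nat.card_congr (recEquiv m n), Nat.card_sum]

end PlaneTree

/-- binomial identity for the induction step -/
lemma arith_step (m N : ℕ) :
    (N+1) * (if m+1 ≤ N+2 ∧ (N+2-(m+1)) % 3 = 0 then (m+1) * Nat.choose (N+2) ((N+2-(m+1))/3) else 0)
    = (N+2) * ((if m ≤ N+1 ∧ (N+1-m) % 3 = 0 then m * Nat.choose (N+1) ((N+1-m)/3) else 0)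
             + (if m+3 ≤ N+1 ∧ (N+1-(m+3)) % 3 = 0 then (m+3) * Nat.choose (N+1) ((N+1-(m+3))/3) else 0)) := by
  by_cases hc : m ≤ N+1 ∧ (N+1-m) % 3 = 0
  · obtain ⟨hm, hmod⟩ := hc
    have hnum : N+2-(m+1) = N+1-m := by omega
    rw [if_pos ⟨by omega, by omega⟩, if_pos ⟨hm, hmod⟩, hnum]
    by_cases hk : N + 1 = m
    · -- k = 0 case
      have h30 : ¬ (m+3 ≤ N+1) := by omega
      rw [if_neg (by tauto)]
      have : (N+1-m)/3 = 0 := by omega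
      rw [this]
      subst hk
      simp [Nat.choose_zero_right]
      ring
    · -- k ≥ 1 case
      have hge : m + 3 ≤ N + 1 := by omega
      obtain ⟨j, hj⟩ : ∃ j, (N+1-m)/3 = j + 1 := ⟨(N+1-m)/3 - 1, by omega⟩
      have hN : N + 1 = m + 3*j + 3 := by omega
      rw [if_pos ⟨hge, by omega⟩, hj]
      have hj2 : (N+1-(m+3))/3 = j := by omega
      rw [hj2]
      -- identities
      have h1 : (N+2) * Nat.choose (N+1) j = Nat.choose (N+2) (j+1) * (j+1) :=
        Nat.add_one_mul_choose_eq (N+1) j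
      have h2 : Nat.choose (N+2) (j+1) = Nat.choose (N+1) j + Nat.choose (N+1) (j+1) :=
        Nat.choose_succ_succ (N+1) j
      have h2' : (N+2) * Nat.choose (N+1) (j+1) + (j+1) * Nat.choose (N+2) (j+1)
          = (N+2) * Nat.choose (N+2) (j+1) := by
        rw [h2]
        nlinarith [h1]
      have hN' : N = m + 3*j + 2 := by omega
      subst hN'
      zify at h1 h2' ⊢
      linear_combination (-(m:ℤ)) * h2' - ((m:ℤ)+3) * h1
  · rw [if_neg (by omega), if_neg (by tauto), if_neg (by omega)]
    simp

namespace PlaneTree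

lemma key (n : ℕ) : ∀ m, n * Fc m n =
    if m ≤ n ∧ (n - m) % 3 = 0 then m * Nat.choose n ((n - m) / 3) else 0 := by
  induction n with
  | zero =>
    intro m
    split
    · next h =>
      have hm : m = 0 := by omega
      subst hm
      simp
    · simp
  | succ n ih =>
    intro m
    match m with
    | 0 =>
      rw [Fc_zero_succ]
      split <;> simp
    | m + 1 =>
      rw [Fc_rec]
      match n, ih with
      | 0, _ =>
        rw [Fc_zero, Fc_zero]
        by_cases hm0 : m = 0
        · subst hm0
          norm_num
        · rw [if_neg hm0, if_neg (by omega), if_neg (by omega)]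
      | N + 1, ih =>
        apply Nat.eq_of_mul_eq_mul_left (show 0 < N + 1 by omega)
        rw [show (N+1) * ((N+2) * (Fc m (N+1) + Fc (m+3) (N+1)))
            = (N+2) * ((N+1) * Fc m (N+1) + (N+1) * Fc (m+3) (N+1)) from by ring,
          ih m, ih (m+3)]
        exact (arith_step m N).symm

end PlaneTree


/-- The number of forests of `m` ternary trees with `n` nodes in total equals
`(m/n) · C(n, (n-m)/3)`, with the convention that the binomial coefficient is `0`
if `(n-m)/3` is not a nonnegative integer. -/
theorem ternary_forest_count (m n : ℕ) (hn : 0 < n) :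
    n * Nat.card {f : List PlaneTree //
        f.length = m ∧ (∀ t ∈ f, t.IsTernary) ∧ (f.map PlaneTree.size).sum = n} =
      if m ≤ n ∧ (n - m) % 3 = 0 then m * Nat.choose n ((n - m) / 3) else 0 :=
  PlaneTree.key n m
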